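/- For every integer γ ≥ 1 there is a constant C > 0 such that every connected graph G on n vertices with girth at least 2γ + 1 admits an emulator H with at most C·n^{1 + 1/(2γ + 1)} edges satisfying dist_H(u,v) ≤ dist_G(u,v) + 4γ for all vertices u, v. -/

import Mathlib

open SimpleGraph

/-- The total weight of a walk, for an edge-weight function `w`. -/
def walkWeight {V : Type*} {G : SimpleGraph V} (w : Sym2 V → ℕ) {u v : V} (p : G.Walk u v) : ℕ :=
  (p.edges.map w).sum

/-- The weighted distance between two vertices: the minimum total weight of a walk. -/
noncomputable def wdist {V : Type*} (G : SimpleGraph V) (w : Sym2 V → ℕ) (u v : V) : ℕ :=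
  sInf {m : ℕ | ∃ p : G.Walk u v, walkWeight w p = m}

/-- The weight that an emulator of `G` assigns to an emulator edge `{u, v}`,
namely `dist_G(u, v)`. -/
noncomputable def emuWeight {V : Type*} (G : SimpleGraph V) : Sym2 V → ℕ :=
  Sym2.lift ⟨fun u v => G.dist u v, fun _ _ => SimpleGraph.dist_comm⟩

section basics
variable {V : Type*} {G H : SimpleGraph V} {w : Sym2 V → ℕ} {u v x : V}

lemma walkWeight_nil : walkWeight w (Walk.nil : G.Walk u u) = 0 := rfl

lemma walkWeight_cons (h : G.Adj u x) (p : G.Walk x v) :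
    walkWeight w (Walk.cons h p) = w s(u, x) + walkWeight w p := by
  simp [walkWeight]

lemma walkWeight_append {y : V} (p : G.Walk u y) (q : G.Walk y v) :
    walkWeight w (p.append q) = walkWeight w p + walkWeight w q := by
  simp [walkWeight, Walk.edges_append]

lemma walkWeight_reverse (p : G.Walk u v) :
    walkWeight w p.reverse = walkWeight w p := by
  simp [walkWeight, Walk.edges_reverse, List.sum_reverse]

lemma wdist_le_walk (p : G.Walk u v) : wdist G w u v ≤ walkWeight w p :=
  Nat.sInf_le ⟨p, rfl⟩

lemma emuWeight_mk (G : SimpleGraph V) (a b : V) : emuWeight G s(a, b) = G.dist a b := rfl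

end basics

section lemP
variable {V : Type*} {γ : ℕ} {G : SimpleGraph V}

/-- Girth hypothesis in usable form. -/
def BigGirth (G : SimpleGraph V) (γ : ℕ) : Prop :=
  ∀ (a : V) (c : G.Walk a a), c.IsCycle → 2 * γ + 1 ≤ c.length

lemma bigGirth_of_egirth (hg : ((2 * γ + 1 : ℕ) : ℕ∞) ≤ G.egirth) : BigGirth G γ := by
  intro a c hc
  have := le_egirth.mp hg a c hc
  exact_mod_cast this

/-- In a graph with no cycles of length `≤ 2γ`, there are no two distinct short paths
between the same pair of vertices. -/
lemma no_two_paths (hG : BigGirth G γ) {B : SimpleGraph V} (hBG : B ≤ G) {a b : V}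
    {p q : B.Walk a b} (hp : p.IsPath) (hq : q.IsPath) (hne : p ≠ q)
    (hlen : p.length + q.length ≤ 2 * γ) : False := by
  classical
  set s : Set (Sym2 V) := {e | e ∈ p.edges ∨ e ∈ q.edges} with hs
  set B' := SimpleGraph.fromEdgeSet s with hB'
  have hB'B : B' ≤ B := by
    intro x y hxy
    rw [hB', fromEdgeSet_adj] at hxy
    rcases hxy.1 with h | h
    · exact p.adj_of_mem_edges h
    · exact q.adj_of_mem_edges h
  have hpe : ∀ e ∈ p.edges, e ∈ B'.edgeSet := by
    intro e he
    rw [hB', edgeSet_fromEdgeSet]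
    exact ⟨Or.inl he, B.not_isDiag_of_mem_edgeSet (p.edges_subset_edgeSet he)⟩
  have hqe : ∀ e ∈ q.edges, e ∈ B'.edgeSet := by
    intro e he
    rw [hB', edgeSet_fromEdgeSet]
    exact ⟨Or.inr he, B.not_isDiag_of_mem_edgeSet (q.edges_subset_edgeSet he)⟩
  have hnotac : ¬ B'.IsAcyclic := by
    intro hac
    have h1 := hac.path_unique ⟨p.transfer B' hpe, hp.transfer hpe⟩
      ⟨q.transfer B' hqe, hq.transfer hqe⟩
    have h2 : p.transfer B' hpe = q.transfer B' hqe := congrArg Subtype.val h1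
    have h3 := congrArg (fun r : B'.Walk a b =>
      r.transfer B (fun e he => edgeSet_mono hB'B (r.edges_subset_edgeSet he))) h2
    simp only [Walk.transfer_transfer] at h3
    rw [Walk.transfer_self, Walk.transfer_self] at h3
    exact hne h3
  rw [SimpleGraph.IsAcyclic] at hnotac
  push_neg at hnotac
  obtain ⟨v0, c, hc⟩ := hnotac
  -- bound the cycle length
  have hce : ∀ e ∈ c.edges, e ∈ p.edges ++ q.edges := by
    intro e he
    have := c.edges_subset_edgeSet he
    rw [hB', edgeSet_fromEdgeSet] at this
    rcases this.1 with h | h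
    · exact List.mem_append.mpr (Or.inl h)
    · exact List.mem_append.mpr (Or.inr h)
  have hlen1 : c.length ≤ 2 * γ := by
    classical
    have h1 : c.edges.toFinset.card = c.edges.length := by
      rw [List.card_toFinset, List.dedup_eq_self.mpr hc.edges_nodup]
    have h2 : c.edges.toFinset ⊆ (p.edges ++ q.edges).toFinset := by
      intro e he
      rw [List.mem_toFinset] at he ⊢
      exact hce e he
    have h3 : (p.edges ++ q.edges).toFinset.card ≤ (p.edges ++ q.edges).length := by
      rw [List.card_toFinset]
      exact (List.dedup_sublist _).length_le
    have := (Finset.card_le_card h2).trans h3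
    rw [h1, c.length_edges] at this
    simpa [p.length_edges, q.length_edges] using this.trans (by simpa using hlen)
  have hcG : (c.mapLe (hB'B.trans hBG)).IsCycle := hc.mapLe _
  have := hG v0 _ hcG
  have hlencG : (c.mapLe (hB'B.trans hBG)).length = c.length := c.length_map _
  omega

end lemP

section chains
variable {V : Type*} [Fintype V] [DecidableEq V]

lemma walk_of_chain {B : SimpleGraph V} :
    ∀ (l : List V) (x : V), List.Chain B.Adj x l → ∀ (e : V),
      (x :: l).getLast (List.cons_ne_nil _ _) = e → ∃ w : B.Walk x e, w.support = x :: l := by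
  intro l
  induction l with
  | nil =>
    intro x _ e he
    simp only [List.getLast_singleton] at he
    subst he
    exact ⟨Walk.nil, rfl⟩
  | cons y t ih =>
    intro x hch e he
    replace hch := List.chain_cons.mp hch
    have he' : (y :: t).getLast (List.cons_ne_nil _ _) = e := by
      rw [← he]; exact (List.getLast_cons _).symm
    obtain ⟨w', hw'⟩ := ih y hch.2 e he'
    exact ⟨Walk.cons hch.1 w', by simp [hw']⟩

variable (B : SimpleGraph V) [DecidableRel B.Adj] (s : Finset V) (r : V)

/-- One-step extensions of a non-backtracking chain. -/
def ext1 (x : V) (l : List V) : Finset (V × List V) :=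
  ((B.neighborFinset x ∩ s).erase (l.headD x)).image (fun z => (z, x :: l))

/-- Non-backtracking chains of length `j` starting (in reverse) at `r`. -/
def chains : ℕ → Finset (V × List V)
  | 0 => {(r, [])}
  | (j+1) => (chains j).biUnion (fun q => ext1 B s q.1 q.2)

lemma mem_chains_succ {j : ℕ} {q : V × List V} (hq : q ∈ chains B s r (j+1)) :
    ∃ p ∈ chains B s r j, B.Adj p.1 q.1 ∧ q.1 ∈ s ∧ q.2 = p.1 :: p.2 ∧
      q.1 ≠ p.2.headD p.1 := by
  classical
  rw [chains, Finset.mem_biUnion] at hq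
  obtain ⟨p, hp, hq⟩ := hq
  rw [ext1, Finset.mem_image] at hq
  obtain ⟨z, hz, hzq⟩ := hq
  have h1 := Finset.mem_of_mem_erase hz
  rw [Finset.mem_inter, SimpleGraph.mem_neighborFinset] at h1
  exact ⟨p, hp, by subst hzq; exact h1.1, by subst hzq; exact h1.2, by rw [← hzq],
    by subst hzq; exact Finset.ne_of_mem_erase hz⟩

lemma chains_spec (hr : r ∈ s) :
    ∀ j, ∀ q ∈ chains B s r j, q.1 ∈ s ∧ q.2.length = j ∧ List.Chain B.Adj q.1 q.2 ∧
      (q.1 :: q.2).getLast (List.cons_ne_nil _ _) = r := by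
  intro j
  induction j with
  | zero =>
    intro q hq
    rw [chains, Finset.mem_singleton] at hq
    subst hq
    exact ⟨hr, rfl, List.Chain.nil, rfl⟩
  | succ j ih =>
    intro q hq
    obtain ⟨p, hp, hadj, hqs, hq2, -⟩ := mem_chains_succ B s r hq
    obtain ⟨hps, hplen, hpch, hplast⟩ := ih p hp
    refine ⟨hqs, by rw [hq2]; simp [hplen], by rw [hq2]; exact List.chain_cons.mpr ⟨hadj.symm, hpch⟩, ?_⟩
    rw [hq2, ← hplast]
    exact List.getLast_cons _

lemma chains_card {δ : ℕ} (hδ : ∀ x ∈ s, δ + 1 ≤ (B.neighborFinset x ∩ s).card)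
    (hr : r ∈ s) : ∀ j, δ ^ j ≤ (chains B s r j).card := by
  intro j
  induction j with
  | zero => simp [chains]
  | succ j ih =>
    rw [chains]
    have hdisj : ∀ q₁ ∈ chains B s r j, ∀ q₂ ∈ chains B s r j, q₁ ≠ q₂ →
        Disjoint (ext1 B s q₁.1 q₁.2) (ext1 B s q₂.1 q₂.2) := by
      intro q1 _ q2 _ hne
      rw [Finset.disjoint_left]
      intro a ha1 ha2
      rw [ext1, Finset.mem_image] at ha1 ha2
      obtain ⟨z1, -, hz1⟩ := ha1
      obtain ⟨z2, -, hz2⟩ := ha2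
      rw [← hz2] at hz1
      apply hne
      have h2 := congrArg Prod.snd hz1
      simp only at h2
      exact Prod.ext (by injection h2) (by injection h2)
    rw [Finset.card_biUnion hdisj]
    have h1 : ∀ q ∈ chains B s r j, δ ≤ (ext1 B s q.1 q.2).card := by
      intro q hq
      have hqs := (chains_spec B s r hr j q hq).1
      rw [ext1, Finset.card_image_of_injective _ (fun z1 z2 h => by injection h)]
      have := hδ q.1 hqs
      have h2 := Finset.pred_card_le_card_erase
        (s := B.neighborFinset q.1 ∩ s) (a := q.2.headD q.1)
      omega
    calc δ ^ (j+1) = δ ^ j * δ := pow_succ δ j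
      _ ≤ (chains B s r j).card * δ := Nat.mul_le_mul_right δ ih
      _ ≤ ∑ q ∈ chains B s r j, (ext1 B s q.1 q.2).card := by
          simpa [smul_eq_mul] using Finset.card_nsmul_le_sum (chains B s r j)
            (fun q => (ext1 B s q.1 q.2).card) δ h1

/-- Chains have no repeated vertices, provided the ambient graph has large girth. -/
lemma chains_nodup {γ : ℕ} {G : SimpleGraph V} (hG : BigGirth G γ)
    (hBG : B ≤ G) (hr : r ∈ s) :
    ∀ j, j ≤ γ → ∀ q ∈ chains B s r j, (q.1 :: q.2).Nodup := by
  intro j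
  induction j with
  | zero =>
    intro _ q hq
    rw [chains, Finset.mem_singleton] at hq
    subst hq
    simp
  | succ j ih =>
    intro hjγ q hq
    obtain ⟨p, hp, hadj, -, hq2, hnbt⟩ := mem_chains_succ B s r hq
    have hpnd := ih (by omega) p hp
    obtain ⟨-, hplen, hpch, -⟩ := chains_spec B s r hr j p hp
    have hznotin : q.1 ∉ p.1 :: p.2 := by
      intro hmem
      rcases List.mem_cons.mp hmem with h | h
      · exact hadj.ne h.symm
      -- q.1 appears in the tail p.2
      cases hp2 : p.2 with
      | nil => rw [hp2] at h; simp at h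
      | cons y t =>
        rw [hp2] at h hpch hplen hpnd hnbt
        simp only [List.headD_cons] at hnbt
        rcases List.mem_cons.mp h with h' | h'
        · exact hnbt h'
        · -- q.1 ∈ t : build two short paths and contradict girth
          obtain ⟨t₁, t₂, ht⟩ := List.append_of_mem h'
          have hch2 : List.Chain B.Adj p.1 (y :: t₁ ++ [q.1]) := by
            have h5 : List.Chain B.Adj p.1 ((y :: t₁) ++ q.1 :: t₂) := by
              simpa [ht] using hpch
            exact (List.isChain_cons_split.mp h5).1
          have hpre : (p.1 :: (y :: t₁ ++ [q.1])).Nodup := by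
            have hsub : (p.1 :: (y :: t₁ ++ [q.1])) <+: (p.1 :: y :: t) := by
              refine ⟨t₂, ?_⟩
              simp [ht]
            exact hpnd.sublist hsub.sublist
          obtain ⟨w1, hw1⟩ := walk_of_chain (y :: t₁ ++ [q.1]) p.1 hch2 q.1 (by simp)
          have hw1path : w1.IsPath := by
            rw [SimpleGraph.Walk.isPath_def, hw1]; exact hpre
          have hw1len : w1.length = t₁.length + 2 := by
            have h6 := w1.length_support
            rw [hw1] at h6
            simp at h6
            omega
          set w2 : B.Walk p.1 q.1 := Walk.cons hadj Walk.nil with hw2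
          have hw2path : w2.IsPath := by
            rw [SimpleGraph.Walk.isPath_def, hw2]
            simp [hadj.ne]
          have hne12 : w1 ≠ w2 := by
            intro hcontra
            have h7 := congrArg SimpleGraph.Walk.length hcontra
            rw [hw1len, hw2] at h7
            simp at h7
          have hlen12 : w1.length + w2.length ≤ 2 * γ := by
            have ht1 : t₁.length + 2 ≤ j := by
              rw [ht] at hplen
              simp at hplen
              omega
            rw [hw1len, hw2]
            simp only [SimpleGraph.Walk.length_cons, SimpleGraph.Walk.length_nil]
            omega
          exact no_two_paths hG hBG hw1path hw2path hne12 hlen12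
    rw [hq2]
    exact List.nodup_cons.mpr ⟨hznotin, hpnd⟩
/-- Two distinct chains of length `γ` have distinct heads. -/
lemma chains_head_inj {γ : ℕ} {G : SimpleGraph V} (hG : BigGirth G γ)
    (hBG : B ≤ G) (hr : r ∈ s) {q₁ q₂ : V × List V}
    (h1 : q₁ ∈ chains B s r γ) (h2 : q₂ ∈ chains B s r γ) (hh : q₁.1 = q₂.1) : q₁ = q₂ := by
  by_contra hne
  obtain ⟨x1, l1⟩ := q₁
  obtain ⟨x2, l2⟩ := q₂
  simp only at hh
  subst hh
  obtain ⟨-, hlen1, hch1, hlast1⟩ := chains_spec B s r hr γ (x1, l1) h1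
  obtain ⟨-, hlen2, hch2, hlast2⟩ := chains_spec B s r hr γ (x1, l2) h2
  simp only at hlen1 hch1 hlast1 hlen2 hch2 hlast2
  obtain ⟨w1, hw1⟩ := walk_of_chain l1 x1 hch1 r hlast1
  obtain ⟨w2, hw2⟩ := walk_of_chain l2 x1 hch2 r hlast2
  have hq2ne : l1 ≠ l2 := fun h => hne (by simp [h])
  have hw1p : w1.IsPath := by
    rw [SimpleGraph.Walk.isPath_def, hw1]
    exact chains_nodup B s r hG hBG hr γ le_rfl (x1, l1) h1
  have hw2p : w2.IsPath := by
    rw [SimpleGraph.Walk.isPath_def, hw2]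
    exact chains_nodup B s r hG hBG hr γ le_rfl (x1, l2) h2
  have hl1 : w1.length = γ := by
    have := w1.length_support; rw [hw1] at this; simp [hlen1] at this; omega
  have hl2 : w2.length = γ := by
    have := w2.length_support; rw [hw2] at this; simp [hlen2] at this; omega
  have hwne : w1 ≠ w2 := by
    intro h; apply hq2ne
    have := congrArg SimpleGraph.Walk.support h
    rw [hw1, hw2] at this
    exact List.tail_eq_of_cons_eq this
  exact no_two_paths hG hBG hw1p hw2p hwne (by omega)

/-- Main counting consequence: a min-degree-`δ+1` set `s` (w.r.t. `B ≤ G`) spawns at least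
`δ^γ` distinct vertices within `G`-distance `γ` of `r`, all satisfying any predicate `P`
that holds for heads of `γ`-chains. -/
lemma big_ball {γ : ℕ} {G : SimpleGraph V} (hG : BigGirth G γ)
    (hBG : B ≤ G) {δ : ℕ} (hδ : ∀ x ∈ s, δ + 1 ≤ (B.neighborFinset x ∩ s).card)
    (hr : r ∈ s) (P : V → Prop) [DecidablePred P]
    (hP : ∀ q ∈ chains B s r γ, P q.1) :
    δ ^ γ ≤ (Finset.univ.filter (fun x => G.dist r x ≤ γ ∧ P x)).card := by
  classical
  have hcard := chains_card B s r hδ hr γ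
  have himg : (chains B s r γ).image Prod.fst ⊆
      Finset.univ.filter (fun x => G.dist r x ≤ γ ∧ P x) := by
    intro x hx
    rw [Finset.mem_image] at hx
    obtain ⟨q, hq, hqx⟩ := hx
    obtain ⟨-, hlen, hch, hlast⟩ := chains_spec B s r hr γ q hq
    obtain ⟨w, hw⟩ := walk_of_chain q.2 q.1 hch r hlast
    have hdist : G.dist r x ≤ γ := by
      have h1 : G.dist q.1 r ≤ γ := by
        have h2 := SimpleGraph.dist_le (w.mapLe hBG)
        have h3 : (w.mapLe hBG).length = w.length := w.length_map _
        have h4 : w.length = γ := by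
          have := w.length_support; rw [hw] at this; simp [hlen] at this; omega
        rw [h3, h4] at h2
        exact h2
      rw [SimpleGraph.dist_comm] at h1
      rw [← hqx]
      exact h1
    rw [Finset.mem_filter]
    exact ⟨Finset.mem_univ x, hdist, hqx ▸ hP q hq⟩
  calc δ ^ γ ≤ (chains B s r γ).card := hcard
    _ = ((chains B s r γ).image Prod.fst).card := by
        rw [Finset.card_image_of_injOn]
        intro q1 h1 q2 h2 hh
        exact chains_head_inj B s r hG hBG hr h1 h2 hh
    _ ≤ _ := Finset.card_le_card himg
end chains

section peel
variable {V : Type*} [Fintype V] [DecidableEq V]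

open Finset in
lemma peel_bound (B : SimpleGraph V) [DecidableRel B.Adj] (k : ℕ)
    (h : ∀ s : Finset V, s.Nonempty → ∃ x ∈ s, ((B.neighborFinset x) ∩ s).card ≤ k) :
    B.edgeFinset.card ≤ k * Fintype.card V := by
  classical
  have main : ∀ s : Finset V,
      (B.edgeFinset.filter (fun e => ∀ v ∈ e, v ∈ s)).card ≤ k * s.card := by
    intro s
    induction s using Finset.strongInduction with
    | _ s ih =>
      rcases s.eq_empty_or_nonempty with rfl | hs
      · have : (B.edgeFinset.filter (fun e => ∀ v ∈ e, v ∈ (∅ : Finset V))) = ∅ := by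
          rw [Finset.filter_eq_empty_iff]
          intro e _ hall
          exact absurd (hall _ (Sym2.out_fst_mem e)) (by simp)
        rw [this]
        simp
      · obtain ⟨x, hxs, hdeg⟩ := h s hs
        have hsub : B.edgeFinset.filter (fun e => ∀ v ∈ e, v ∈ s) ⊆
            (B.edgeFinset.filter (fun e => ∀ v ∈ e, v ∈ s.erase x)) ∪
              (B.neighborFinset x ∩ s).image (fun z => s(x, z)) := by
          intro e he
          rw [Finset.mem_filter] at he
          obtain ⟨heE, hin⟩ := he
          by_cases hx : x ∈ e
          · obtain ⟨y, rfl⟩ := Sym2.mem_iff_exists.mp hx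
            refine Finset.mem_union_right _ (Finset.mem_image.mpr ⟨y, ?_, rfl⟩)
            rw [Finset.mem_inter, SimpleGraph.mem_neighborFinset]
            exact ⟨(SimpleGraph.mem_edgeFinset.mp heE : B.Adj x y), hin y (by simp)⟩
          · refine Finset.mem_union_left _ (Finset.mem_filter.mpr ⟨heE, fun v hv => ?_⟩)
            exact Finset.mem_erase.mpr ⟨fun hvx => hx (hvx ▸ hv), hin v hv⟩
        have h1 := (Finset.card_le_card hsub).trans (Finset.card_union_le _ _)
        have h2 := ih (s.erase x) (Finset.erase_ssubset hxs)
        have h3 : ((B.neighborFinset x ∩ s).image (fun z => s(x, z))).card ≤ k :=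
          le_trans (Finset.card_image_le) hdeg
        have h4 := Finset.card_erase_add_one hxs
        have h5 : k * (s.erase x).card + k = k * s.card := by
          rw [← h4]; ring
        omega
  have := main Finset.univ
  simpa using this
end peel

section greedy
variable {V : Type*} [Fintype V] [DecidableEq V]

open Finset in
/-- The ball of radius `γ` around `v` in `G`, as a `Finset`. -/
noncomputable def ballF (G : SimpleGraph V) (γ : ℕ) (v : V) : Finset V := by
  classical exact Finset.univ.filter (fun x => G.dist v x ≤ γ)

lemma mem_ballF {G : SimpleGraph V} {γ : ℕ} {v x : V} :
    x ∈ ballF G γ v ↔ G.dist v x ≤ γ := by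
  classical
  simp [ballF]

/-- Greedy clustering. -/
lemma greedy_ex (G : SimpleGraph V) (γ T : ℕ) (hT : 0 < T) :
    ∀ U0 : Finset V, ∃ (U D : Finset V) (f : V → V),
      U ⊆ U0 ∧ (∀ v : V, ((ballF G γ v) ∩ U).card < T) ∧
      (∀ x ∈ U0 \ U, f x ∈ D ∧ G.dist x (f x) ≤ γ) ∧
      U.card + D.card * T ≤ U0.card := by
  classical
  intro U0
  induction U0 using Finset.strongInduction with
  | _ U0 ih =>
    by_cases hex : ∃ v : V, T ≤ ((ballF G γ v) ∩ U0).card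
    · obtain ⟨v, hv⟩ := hex
      have hne : ((ballF G γ v) ∩ U0).Nonempty := by
        rw [← Finset.card_pos]; omega
      obtain ⟨y, hy⟩ := hne
      have hss : U0 \ ballF G γ v ⊂ U0 := by
        rw [Finset.mem_inter] at hy
        refine Finset.ssubset_iff_of_subset (Finset.sdiff_subset) |>.mpr ?_
        exact ⟨y, hy.2, fun hc => (Finset.mem_sdiff.mp hc).2 hy.1⟩
      obtain ⟨U, D, f, hU, hsmall, hf, hcard⟩ := ih _ hss
      refine ⟨U, insert v D, fun x => if G.dist v x ≤ γ ∧ x ∉ U0 \ ballF G γ v then v else f x,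
        hU.trans Finset.sdiff_subset, hsmall, ?_, ?_⟩
      · intro x hx
        rw [Finset.mem_sdiff] at hx
        simp only
        split_ifs with hcond
        · exact ⟨Finset.mem_insert_self _ _, by rw [SimpleGraph.dist_comm]; exact hcond.1⟩
        · push_neg at hcond
          by_cases hx2 : x ∈ U0 \ ballF G γ v
          · have := hf x (by rw [Finset.mem_sdiff]; exact ⟨hx2, hx.2⟩)
            exact ⟨Finset.mem_insert_of_mem this.1, this.2⟩
          · exfalso
            have hxball : x ∈ ballF G γ v := by
              by_contra hc
              exact hx2 (Finset.mem_sdiff.mpr ⟨hx.1, hc⟩)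
            rw [mem_ballF] at hxball
            exact hx2 (hcond hxball)
      · have h1 : (insert v D).card ≤ D.card + 1 := Finset.card_insert_le _ _
        have h2 : (U0 \ ballF G γ v).card + (U0 ∩ ballF G γ v).card = U0.card :=
          Finset.card_sdiff_add_card_inter _ _
        have h3 : T ≤ (U0 ∩ ballF G γ v).card := by
          rwa [Finset.inter_comm] at hv
        have h4 : (insert v D).card * T ≤ D.card * T + T := by
          calc (insert v D).card * T ≤ (D.card + 1) * T := Nat.mul_le_mul_right T h1
            _ = D.card * T + T := by ring
        omega
    · push_neg at hex
      exact ⟨U0, ∅, id, le_refl _, fun v => hex v, by simp, by simp⟩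
end greedy

section main
variable {V : Type*} [Fintype V] [DecidableEq V]

lemma parity_chains (B : SimpleGraph V) [DecidableRel B.Adj] (s : Finset V) (r : V)
    (U : Finset V)
    (halt : ∀ x y : V, B.Adj x y → ((x ∈ U ∧ y ∉ U) ∨ (y ∈ U ∧ x ∉ U))) :
    ∀ j, ∀ q ∈ chains B s r j, (q.1 ∈ U ↔ ((r ∈ U) ↔ Even j)) := by
  intro j
  induction j with
  | zero =>
    intro q hq
    rw [chains, Finset.mem_singleton] at hq
    subst hq
    simp
  | succ j ih =>
    intro q hq
    obtain ⟨p, hp, hadj, -, -, -⟩ := mem_chains_succ B s r hq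
    have h1 := ih p hp
    have h2 := halt _ _ hadj
    have h3 : Even (j+1) ↔ ¬ Even j := by rw [Nat.even_add_one]
    rw [h3]
    tauto

set_option maxHeartbeats 1000000 in
open Finset in
lemma emulator_exists (γ : ℕ) (hγ : 1 ≤ γ) (G : SimpleGraph V) (hconn : G.Connected)
    (hG : BigGirth G γ) (d : ℕ) (hd : 1 ≤ d) :
    ∃ (H : SimpleGraph V) (k : ℕ),
      H.edgeSet.ncard ≤ 2 * ((d+1) * Fintype.card V) + Fintype.card V + k * k ∧
      k * d ^ γ ≤ Fintype.card V ∧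
      (∀ u v : V, H.Reachable u v ∧
        wdist H (emuWeight G) u v ≤ G.dist u v + 4 * γ) := by
  classical
  set T := d ^ γ with hTdef
  have hT : 0 < T := Nat.pow_pos hd
  obtain ⟨U, D, f, -, hsmall, hf0, hcard⟩ := greedy_ex G γ T hT Finset.univ
  have hf : ∀ x : V, x ∉ U → f x ∈ D ∧ G.dist x (f x) ≤ γ := by
    intro x hx
    exact hf0 x (by simp [hx])
  set R : V → V → Prop := fun x y =>
    (G.Adj x y ∧ (x ∈ U ∨ y ∈ U)) ∨ (x ∉ U ∧ y = f x) ∨ (x ∈ D ∧ y ∈ D) with hR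
  set H := SimpleGraph.fromRel R with hH
  have hHadj : ∀ x y : V, G.Adj x y → (x ∈ U ∨ y ∈ U) → H.Adj x y := by
    intro x y hadj hU
    rw [hH, SimpleGraph.fromRel_adj]
    exact ⟨hadj.ne, Or.inl (Or.inl ⟨hadj, hU⟩)⟩
  letI : DecidableRel H.Adj := Classical.decRel _
  refine ⟨H, D.card, ?_, ?_, ?_⟩
  · -- edge count
    have hncard : H.edgeSet.ncard = H.edgeFinset.card := by
      rw [← SimpleGraph.coe_edgeFinset, Set.ncard_coe_finset]
    rw [hncard]
    set B1 := SimpleGraph.fromRel (fun x y => G.Adj x y ∧ x ∈ U ∧ y ∈ U) with hB1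
    set B2 := SimpleGraph.fromRel (fun x y => G.Adj x y ∧ x ∈ U ∧ y ∉ U) with hB2
    have hB1adj : ∀ x y, B1.Adj x y → G.Adj x y ∧ x ∈ U ∧ y ∈ U := by
      intro x y h
      rw [hB1, SimpleGraph.fromRel_adj] at h
      rcases h.2 with ⟨h1, h2, h3⟩ | ⟨h1, h2, h3⟩
      · exact ⟨h1, h2, h3⟩
      · exact ⟨h1.symm, h3, h2⟩
    have hB2adj : ∀ x y, B2.Adj x y →
        G.Adj x y ∧ ((x ∈ U ∧ y ∉ U) ∨ (y ∈ U ∧ x ∉ U)) := by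
      intro x y h
      rw [hB2, SimpleGraph.fromRel_adj] at h
      rcases h.2 with ⟨h1, h2, h3⟩ | ⟨h1, h2, h3⟩
      · exact ⟨h1, Or.inl ⟨h2, h3⟩⟩
      · exact ⟨h1.symm, Or.inr ⟨h2, h3⟩⟩
    have hB1le : B1 ≤ G := fun x y h => (hB1adj x y h).1
    have hB2le : B2 ≤ G := fun x y h => (hB2adj x y h).1
    -- the ball filter identity
    have hballeq : ∀ r : V, Finset.univ.filter (fun x => G.dist r x ≤ γ ∧ x ∈ U) =
        ballF G γ r ∩ U := by
      intro r
      ext x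
      simp [mem_ballF, Finset.mem_inter]
    letI : DecidableRel B1.Adj := Classical.decRel _
    letI : DecidableRel B2.Adj := Classical.decRel _
    have hbound1 : B1.edgeFinset.card ≤ (d+1) * Fintype.card V := by
      apply peel_bound
      intro s hs
      by_contra hcon
      push_neg at hcon
      have hδ : ∀ x ∈ s, (d+1) + 1 ≤ (B1.neighborFinset x ∩ s).card := by
        intro x hx; exact hcon x hx
      obtain ⟨r, hr⟩ := hs
      have hP : ∀ q ∈ chains B1 s r γ, q.1 ∈ U := by
        intro q hq
        have hqs := (chains_spec B1 s r hr γ q hq).1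
        have h2 := hδ q.1 hqs
        have hne : (B1.neighborFinset q.1 ∩ s).Nonempty := by
          rw [← Finset.card_pos]; omega
        obtain ⟨z, hz⟩ := hne
        rw [Finset.mem_inter, SimpleGraph.mem_neighborFinset] at hz
        exact (hB1adj _ _ hz.1).2.1
      have hball := big_ball B1 s r hG hB1le hδ hr (· ∈ U) hP
      rw [hballeq r] at hball
      have h3 := hsmall r
      have h4 : d ^ γ ≤ (d+1) ^ γ := Nat.pow_le_pow_left (by omega) γ
      omega
    have hbound2 : B2.edgeFinset.card ≤ (d+1) * Fintype.card V := by
      apply peel_bound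
      intro s hs
      by_contra hcon
      push_neg at hcon
      have hδ : ∀ x ∈ s, (d+1) + 1 ≤ (B2.neighborFinset x ∩ s).card := by
        intro x hx; exact hcon x hx
      -- find roots of both sides
      obtain ⟨x0, hx0⟩ := hs
      have hne : (B2.neighborFinset x0 ∩ s).Nonempty := by
        have := hδ x0 hx0
        rw [← Finset.card_pos]; omega
      obtain ⟨z0, hz0⟩ := hne
      rw [Finset.mem_inter, SimpleGraph.mem_neighborFinset] at hz0
      have hpair := (hB2adj _ _ hz0.1).2
      -- choose root r with (r ∈ U ↔ Even γ)
      have hroot : ∃ r ∈ s, (r ∈ U ↔ Even γ) := by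
        by_cases hev : Even γ
        · rcases hpair with ⟨h1, -⟩ | ⟨h1, -⟩
          · exact ⟨x0, hx0, by simp [h1, hev]⟩
          · exact ⟨z0, hz0.2, by simp [h1, hev]⟩
        · rcases hpair with ⟨-, h2⟩ | ⟨-, h2⟩
          · exact ⟨z0, hz0.2, by simp [h2, hev]⟩
          · exact ⟨x0, hx0, by simp [h2, hev]⟩
      obtain ⟨r, hr, hrU⟩ := hroot
      have hpar := parity_chains B2 s r U (fun x y h => (hB2adj x y h).2)
      have hP : ∀ q ∈ chains B2 s r γ, q.1 ∈ U := by
        intro q hq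
        exact (hpar γ q hq).mpr hrU
      have hball := big_ball B2 s r hG hB2le hδ hr (· ∈ U) hP
      rw [hballeq r] at hball
      have h3 := hsmall r
      have h4 : d ^ γ ≤ (d+1) ^ γ := Nat.pow_le_pow_left (by omega) γ
      omega
    -- subset of union
    set F3 : Finset (Sym2 V) := Finset.univ.image (fun x : V => s(x, f x)) with hF3
    set F4 : Finset (Sym2 V) := (D ×ˢ D).image (fun p : V × V => s(p.1, p.2)) with hF4
    have hsub : H.edgeFinset ⊆ B1.edgeFinset ∪ B2.edgeFinset ∪ F3 ∪ F4 := by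
      intro e he
      induction e with
      | _ x y =>
        rw [SimpleGraph.mem_edgeFinset, SimpleGraph.mem_edgeSet, hH, SimpleGraph.fromRel_adj] at he
        obtain ⟨hxy, hcase⟩ := he
        have hmain : ∀ a b : V, a ≠ b → R a b →
            s(a, b) ∈ B1.edgeFinset ∪ B2.edgeFinset ∪ F3 ∪ F4 := by
          intro a b hab hr
          rcases hr with ⟨hadj, hU⟩ | ⟨haU, hbf⟩ | ⟨haD, hbD⟩
          · by_cases haU : a ∈ U <;> by_cases hbU : b ∈ U
            · refine Finset.mem_union_left _ (Finset.mem_union_left _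
                (Finset.mem_union_left _ ?_))
              rw [SimpleGraph.mem_edgeFinset, SimpleGraph.mem_edgeSet, hB1, SimpleGraph.fromRel_adj]
              exact ⟨hab, Or.inl ⟨hadj, haU, hbU⟩⟩
            · refine Finset.mem_union_left _ (Finset.mem_union_left _
                (Finset.mem_union_right _ ?_))
              rw [SimpleGraph.mem_edgeFinset, SimpleGraph.mem_edgeSet, hB2, SimpleGraph.fromRel_adj]
              exact ⟨hab, Or.inl ⟨hadj, haU, hbU⟩⟩
            · refine Finset.mem_union_left _ (Finset.mem_union_left _
                (Finset.mem_union_right _ ?_))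
              rw [SimpleGraph.mem_edgeFinset, SimpleGraph.mem_edgeSet, hB2, SimpleGraph.fromRel_adj]
              exact ⟨hab, Or.inr ⟨hadj.symm, hbU, haU⟩⟩
            · rcases hU with h | h
              · exact absurd h haU
              · exact absurd h hbU
          · refine Finset.mem_union_left _ (Finset.mem_union_right _ ?_)
            rw [hF3, Finset.mem_image]
            exact ⟨a, Finset.mem_univ a, by rw [hbf]⟩
          · refine Finset.mem_union_right _ ?_
            rw [hF4, Finset.mem_image]
            exact ⟨(a, b), Finset.mem_product.mpr ⟨haD, hbD⟩, rfl⟩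
        rcases hcase with hr | hr
        · exact hmain x y hxy hr
        · rw [Sym2.eq_swap]
          exact hmain y x (Ne.symm hxy) hr
    have hF3card : F3.card ≤ Fintype.card V := by
      rw [hF3]
      exact (Finset.card_image_le).trans (by simp)
    have hF4card : F4.card ≤ D.card * D.card := by
      rw [hF4]
      exact (Finset.card_image_le).trans (by rw [Finset.card_product])
    have := Finset.card_le_card hsub
    have hu1 := Finset.card_union_le (B1.edgeFinset ∪ B2.edgeFinset ∪ F3) F4
    have hu2 := Finset.card_union_le (B1.edgeFinset ∪ B2.edgeFinset) F3
    have hu3 := Finset.card_union_le B1.edgeFinset B2.edgeFinset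
    omega
  · -- cluster count
    have : U.card + D.card * T ≤ Fintype.card V := by simpa using hcard
    omega
  · -- distances
    have hop : ∀ x y : V, (H.Adj x y ∨ x = y) →
        ∃ q : H.Walk x y, walkWeight (emuWeight G) q ≤ G.dist x y := by
      rintro x y (h | rfl)
      · refine ⟨Walk.cons h Walk.nil, ?_⟩
        rw [walkWeight_cons]
        simp [walkWeight_nil, emuWeight_mk]
      · exact ⟨Walk.nil, by simp [walkWeight_nil]⟩
    have hdist1 : ∀ x y : V, G.Adj x y → G.dist x y = 1 := by
      intro x y h
      exact SimpleGraph.dist_eq_one_iff_adj.mpr h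
    have hsplit : ∀ (u v : V) (p : G.Walk u v),
        (∃ q : H.Walk u v, walkWeight (emuWeight G) q ≤ p.length) ∨
        (∃ (a : V) (q1 : H.Walk u a) (p2 : G.Walk a v), a ∉ U ∧
          walkWeight (emuWeight G) q1 + p2.length ≤ p.length) := by
      intro u v p
      induction p with
      | @nil w =>
        by_cases hu : w ∈ U
        · exact Or.inl ⟨Walk.nil, by simp [walkWeight_nil]⟩
        · exact Or.inr ⟨w, Walk.nil, Walk.nil, hu, by simp [walkWeight_nil]⟩
      | @cons u x v hadj p ih =>
        by_cases hu : u ∈ U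
        · have hHux : H.Adj u x := hHadj u x hadj (Or.inl hu)
          rcases ih with ⟨q, hq⟩ | ⟨a, q1, p2, ha, hsum⟩
          · refine Or.inl ⟨Walk.cons hHux q, ?_⟩
            rw [walkWeight_cons, emuWeight_mk, hdist1 u x hadj]
            simp only [SimpleGraph.Walk.length_cons]
            omega
          · refine Or.inr ⟨a, Walk.cons hHux q1, p2, ha, ?_⟩
            rw [walkWeight_cons, emuWeight_mk, hdist1 u x hadj]
            simp only [SimpleGraph.Walk.length_cons]
            omega
        · exact Or.inr ⟨u, Walk.nil, Walk.cons hadj p, hu, by simp [walkWeight_nil]⟩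
    intro u v
    obtain ⟨p, hp⟩ := hconn.exists_walk_length_eq_dist u v
    have hfinal : ∃ q : H.Walk u v, walkWeight (emuWeight G) q ≤ p.length + 4 * γ := by
      rcases hsplit u v p with ⟨q, hq⟩ | ⟨a, q1, p2, ha, hsum⟩
      · exact ⟨q, by omega⟩
      · rcases hsplit v a p2.reverse with ⟨q', hq'⟩ | ⟨b, q3, p4, hb, hsum3⟩
        · refine ⟨q1.append q'.reverse, ?_⟩
          rw [walkWeight_append, walkWeight_reverse]
          have := p2.length_reverse
          omega
        · -- main case
          obtain ⟨hfaD, hfadist⟩ := hf a ha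
          obtain ⟨hfbD, hfbdist⟩ := hf b hb
          have hopA : H.Adj a (f a) ∨ a = f a := by
            by_cases h : a = f a
            · exact Or.inr h
            · refine Or.inl ?_
              rw [hH, SimpleGraph.fromRel_adj]
              exact ⟨h, Or.inl (Or.inr (Or.inl ⟨ha, rfl⟩))⟩
          have hopB : H.Adj b (f b) ∨ b = f b := by
            by_cases h : b = f b
            · exact Or.inr h
            · refine Or.inl ?_
              rw [hH, SimpleGraph.fromRel_adj]
              exact ⟨h, Or.inl (Or.inr (Or.inl ⟨hb, rfl⟩))⟩
          have hopD : H.Adj (f a) (f b) ∨ f a = f b := by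
            by_cases h : f a = f b
            · exact Or.inr h
            · refine Or.inl ?_
              rw [hH, SimpleGraph.fromRel_adj]
              exact ⟨h, Or.inl (Or.inr (Or.inr ⟨hfaD, hfbD⟩))⟩
          obtain ⟨qa, hqa⟩ := hop a (f a) hopA
          obtain ⟨qb, hqb⟩ := hop b (f b) hopB
          obtain ⟨qd, hqd⟩ := hop (f a) (f b) hopD
          have hdistab : G.dist a b ≤ p4.length := by
            have h1 := SimpleGraph.dist_le p4
            rw [SimpleGraph.dist_comm] at h1
            exact h1
          have hdd : G.dist (f a) (f b) ≤ γ + G.dist a b + γ := by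
            have t1 := hconn.dist_triangle (u := f a) (v := a) (w := f b)
            have t2 := hconn.dist_triangle (u := a) (v := b) (w := f b)
            have c1 : G.dist (f a) a = G.dist a (f a) := SimpleGraph.dist_comm
            have c2 : G.dist b (f b) ≤ γ := hfbdist
            omega
          refine ⟨q1.append (qa.append (qd.append (qb.reverse.append q3.reverse))), ?_⟩
          rw [walkWeight_append, walkWeight_append, walkWeight_append, walkWeight_append,
            walkWeight_reverse, walkWeight_reverse]
          have hlr := p2.length_reverse
          omega
    obtain ⟨q, hq⟩ := hfinal
    constructor
    · exact ⟨q⟩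
    · have := wdist_le_walk (G := H) (w := emuWeight G) q
      omega
end main

theorem stmt_15 :
    ∀ γ : ℕ, 1 ≤ γ →
    ∃ C : ℝ, 0 < C ∧
      ∀ n : ℕ, ∀ G : SimpleGraph (Fin n), G.Connected →
        ((2 * γ + 1 : ℕ) : ℕ∞) ≤ G.egirth →
        ∃ H : SimpleGraph (Fin n),
          (H.edgeSet.ncard : ℝ) ≤ C * (n : ℝ) ^ (1 + 1 / (2 * (γ : ℝ) + 1)) ∧
          ∀ u v : Fin n, H.Reachable u v ∧
            wdist H (emuWeight G) u v ≤ G.dist u v + 4 * γ := by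
  intro γ hγ
  refine ⟨64, by norm_num, ?_⟩
  intro n G hconn hgirth
  classical
  have hG : BigGirth G γ := bigGirth_of_egirth hgirth
  have hn : 1 ≤ n := by
    have h1 : Nonempty (Fin n) := hconn.nonempty
    have := Fintype.card_pos (α := Fin n)
    exact (by simpa using this : 0 < n)
  have h2γ : (0:ℝ) < 2 * (γ:ℝ) + 1 := by positivity
  set ε : ℝ := 1 / (2 * (γ:ℝ) + 1) with hε
  have hεpos : 0 < ε := by positivity
  set x : ℝ := (n : ℝ) ^ ε with hxdef
  have hn0 : (0:ℝ) < (n:ℝ) := by exact_mod_cast hn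
  have hx1 : 1 ≤ x := by
    rw [hxdef]
    calc (1:ℝ) = (1:ℝ) ^ ε := (Real.one_rpow ε).symm
      _ ≤ (n:ℝ) ^ ε := Real.rpow_le_rpow (by norm_num) (by exact_mod_cast hn) hεpos.le
  set d : ℕ := ⌈x⌉₊ with hddef
  have hd1 : 1 ≤ d := Nat.one_le_ceil_iff.mpr (by linarith)
  obtain ⟨H, k, hE, hkT, hroute⟩ := emulator_exists γ hγ G hconn hG d hd1
  refine ⟨H, ?_, hroute⟩
  have hcardV : Fintype.card (Fin n) = n := Fintype.card_fin n
  rw [hcardV] at hE hkT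
  -- n ≤ d ^ (2γ+1)
  have hxd : x ≤ (d:ℝ) := Nat.le_ceil x
  have hnx : (n:ℝ) = x ^ (2*γ+1 : ℕ) := by
    rw [hxdef, ← Real.rpow_natCast ((n:ℝ) ^ ε) (2*γ+1), ← Real.rpow_mul hn0.le]
    have : ε * ((2*γ+1 : ℕ) : ℝ) = 1 := by
      rw [hε]
      push_cast
      field_simp
    rw [this, Real.rpow_one]
  have hnd : n ≤ d ^ (2*γ+1) := by
    have h1 : (n:ℝ) ≤ ((d:ℝ)) ^ (2*γ+1 : ℕ) := by
      rw [hnx]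
      exact pow_le_pow_left₀ (by linarith) hxd _
    exact_mod_cast h1
  -- k * k ≤ n * d
  have hkk : k * k ≤ n * d := by
    set T := d ^ γ with hT
    have hTpos : 0 < T := Nat.pow_pos hd1
    have hdT : d ^ (2*γ+1) = (d * T) * T := by
      rw [hT, show 2*γ+1 = γ + γ + 1 by ring, pow_add, pow_add, pow_one]
      ring
    have h1 : (k * k) * (T * T) ≤ (n * d) * (T * T) := by
      calc (k * k) * (T * T) = (k * T) * (k * T) := by ring
        _ ≤ n * n := Nat.mul_le_mul hkT hkT
        _ ≤ n * (d ^ (2*γ+1)) := Nat.mul_le_mul_left n hnd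
        _ = (n * d) * (T * T) := by rw [hdT]; ring
    exact Nat.le_of_mul_le_mul_right h1 (by positivity)
  -- total ≤ 6 n d
  have htot : H.edgeSet.ncard ≤ 6 * (n * d) := by
    have : 2 * ((d+1)*n) + n + k*k ≤ 6*(n*d) := by nlinarith [hd1, hn]
    omega
  -- real arithmetic
  have hgoal : (6 * (n * d) : ℝ) ≤ 64 * (n:ℝ) ^ (1 + ε) := by
    have hde : (d:ℝ) ≤ x + 1 := le_of_lt (Nat.ceil_lt_add_one (by linarith))
    have hd2x : (d:ℝ) ≤ 2 * x := by linarith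
    have hrw : (n:ℝ) ^ (1 + ε) = (n:ℝ) * x := by
      rw [Real.rpow_add hn0, Real.rpow_one, hxdef]
    rw [hrw]
    have h1 : (6 * (n * d) : ℝ) ≤ 6 * ((n:ℝ) * (2*x)) := by
      have := mul_le_mul_of_nonneg_left hd2x (le_of_lt hn0)
      nlinarith
    nlinarith [hn0, hx1]
  calc (H.edgeSet.ncard : ℝ) ≤ (6 * (n * d) : ℕ) := by exact_mod_cast htot
    _ = (6 * (n * d) : ℝ) := by push_cast; ring
    _ ≤ 64 * (n:ℝ) ^ (1 + ε) := hgoal
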